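/- Consider the map F : ℝ⁴ → ℝ⁴ sending (h0, φ0, ψ, ι) to (A1, A2, A3, A4), where with A₊ := (1 + cos² ι)/2 and A₋ₓ := cos ι one sets A1 := h0 A₊ cos 2ψ cos φ0 − h0 A₋ₓ sin 2ψ sin φ0, A2 := h0 A₊ sin 2ψ cos φ0 + h0 A₋ₓ cos 2ψ sin φ0, A3 := −h0 A₊ cos 2ψ sin φ0 − h0 A₋ₓ sin 2ψ cos φ0, A4 := −h0 A₊ sin 2ψ sin φ0 + h0 A₋ₓ cos 2ψ cos φ0. At every point (h0, φ0, ψ, ι) with cos ι = 1 or cos ι = −1, the determinant of the Jacobian matrix of F vanishes. Consequently, for any 4×4 matrix Γ(𝐀), the Fisher matrix Γ(θ) = Jᵀ Γ(𝐀) J has zero determinant at such points, so Γ(θ) is not invertible there. -/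

import Mathlib

open Real Matrix

private lemma key_hasDerivAt (P Q x : ℝ) (hs : Real.sin x = 0) :
    HasDerivAt (fun t => P * ((1 + Real.cos t ^ 2) / 2) + Q * Real.cos t) 0 x := by
  have h1 : HasDerivAt Real.cos (-Real.sin x) x := Real.hasDerivAt_cos x
  have h2 := (((h1.pow 2).const_add 1).div_const 2).const_mul P
  have h3 := h1.const_mul Q
  have h := h2.add h3
  exact h.congr_deriv (by simp [hs])

theorem jacobian_singular_at_cos_iota_pm_one
    (F : (Fin 4 → ℝ) → (Fin 4 → ℝ))
    (hF : F = fun θ =>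
      ![θ 0 * ((1 + Real.cos (θ 3) ^ 2) / 2) * Real.cos (2 * θ 2) * Real.cos (θ 1)
          - θ 0 * Real.cos (θ 3) * Real.sin (2 * θ 2) * Real.sin (θ 1),
        θ 0 * ((1 + Real.cos (θ 3) ^ 2) / 2) * Real.sin (2 * θ 2) * Real.cos (θ 1)
          + θ 0 * Real.cos (θ 3) * Real.cos (2 * θ 2) * Real.sin (θ 1),
        -(θ 0 * ((1 + Real.cos (θ 3) ^ 2) / 2)) * Real.cos (2 * θ 2) * Real.sin (θ 1)
          - θ 0 * Real.cos (θ 3) * Real.sin (2 * θ 2) * Real.cos (θ 1),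
        -(θ 0 * ((1 + Real.cos (θ 3) ^ 2) / 2)) * Real.sin (2 * θ 2) * Real.sin (θ 1)
          + θ 0 * Real.cos (θ 3) * Real.cos (2 * θ 2) * Real.cos (θ 1)]) :
    ∀ θ : Fin 4 → ℝ, (Real.cos (θ 3) = 1 ∨ Real.cos (θ 3) = -1) →
      let J : Matrix (Fin 4) (Fin 4) ℝ :=
        Matrix.of fun k i => fderiv ℝ F θ (Pi.single i 1) k
      J.det = 0 ∧
      ∀ ΓA : Matrix (Fin 4) (Fin 4) ℝ,
        (Jᵀ * ΓA * J).det = 0 ∧ ¬ IsUnit (Jᵀ * ΓA * J) := by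
  intro θ hc J
  -- sin (θ 3) = 0
  have hs : Real.sin (θ 3) = 0 := by
    have h1 := Real.sin_sq_add_cos_sq (θ 3)
    rcases hc with h | h <;> nlinarith [Real.sin_sq_add_cos_sq (θ 3)]
  -- F is differentiable at θ
  have hdiff : DifferentiableAt ℝ F θ := by
    rw [differentiableAt_pi]
    intro i
    subst hF
    fin_cases i
    · exact (by fun_prop : DifferentiableAt ℝ (fun x : Fin 4 → ℝ =>
        x 0 * ((1 + Real.cos (x 3) ^ 2) / 2) * Real.cos (2 * x 2) * Real.cos (x 1)
          - x 0 * Real.cos (x 3) * Real.sin (2 * x 2) * Real.sin (x 1)) θ)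
    · exact (by fun_prop : DifferentiableAt ℝ (fun x : Fin 4 → ℝ =>
        x 0 * ((1 + Real.cos (x 3) ^ 2) / 2) * Real.sin (2 * x 2) * Real.cos (x 1)
          + x 0 * Real.cos (x 3) * Real.cos (2 * x 2) * Real.sin (x 1)) θ)
    · exact (by fun_prop : DifferentiableAt ℝ (fun x : Fin 4 → ℝ =>
        -(x 0 * ((1 + Real.cos (x 3) ^ 2) / 2)) * Real.cos (2 * x 2) * Real.sin (x 1)
          - x 0 * Real.cos (x 3) * Real.sin (2 * x 2) * Real.cos (x 1)) θ)
    · exact (by fun_prop : DifferentiableAt ℝ (fun x : Fin 4 → ℝ =>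
        -(x 0 * ((1 + Real.cos (x 3) ^ 2) / 2)) * Real.sin (2 * x 2) * Real.sin (x 1)
          + x 0 * Real.cos (x 3) * Real.cos (2 * x 2) * Real.cos (x 1)) θ)
  -- the third column of J vanishes
  have hcol : ∀ k : Fin 4, fderiv ℝ F θ (Pi.single (3 : Fin 4) 1) k = 0 := by
    intro k
    have hγ : HasDerivAt (Function.update θ 3) (Pi.single (3 : Fin 4) (1 : ℝ)) (θ 3) :=
      hasDerivAt_update θ 3 (θ 3)
    have hcomp : HasDerivAt (F ∘ Function.update θ 3) (fderiv ℝ F θ (Pi.single 3 1)) (θ 3) := by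
      have := hdiff.hasFDerivAt.comp_hasDerivAt_of_eq (θ 3) hγ (by simp)
      exact this
    have hk : HasDerivAt (fun t => F (Function.update θ 3 t) k)
        (fderiv ℝ F θ (Pi.single 3 1) k) (θ 3) := by
      have := (ContinuousLinearMap.proj (R := ℝ) (φ := fun _ : Fin 4 => ℝ)
        k).hasFDerivAt.comp_hasDerivAt (θ 3) hcomp
      exact this
    have hup : ∀ i : Fin 4, i ≠ 3 → ∀ t, Function.update θ 3 t i = θ i := by
      intro i hi t; exact Function.update_of_ne hi _ _
    have h03 : ∀ t, Function.update θ 3 t 3 = t := fun t => Function.update_self _ _ _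
    fin_cases k
    · have hz : HasDerivAt (fun t => F (Function.update θ 3 t) 0) 0 (θ 3) := by
        have h := key_hasDerivAt (θ 0 * Real.cos (2 * θ 2) * Real.cos (θ 1))
          (-(θ 0 * Real.sin (2 * θ 2) * Real.sin (θ 1))) (θ 3) hs
        convert h using 1
        funext t
        simp only [hF, Matrix.cons_val_zero, hup 0 (by decide) t, hup 1 (by decide) t,
          hup 2 (by decide) t, h03 t]
        ring
      exact hk.unique hz
    · have hz : HasDerivAt (fun t => F (Function.update θ 3 t) 1) 0 (θ 3) := by
        have h := key_hasDerivAt (θ 0 * Real.sin (2 * θ 2) * Real.cos (θ 1))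
          (θ 0 * Real.cos (2 * θ 2) * Real.sin (θ 1)) (θ 3) hs
        convert h using 1
        funext t
        simp only [hF, Matrix.cons_val_one, Matrix.cons_val_zero, Matrix.head_cons, hup 0 (by decide) t,
          hup 1 (by decide) t, hup 2 (by decide) t, h03 t]
        ring
      exact hk.unique hz
    · have hz : HasDerivAt (fun t => F (Function.update θ 3 t) 2) 0 (θ 3) := by
        have h := key_hasDerivAt (-(θ 0 * Real.cos (2 * θ 2) * Real.sin (θ 1)))
          (-(θ 0 * Real.sin (2 * θ 2) * Real.cos (θ 1))) (θ 3) hs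
        convert h using 1
        funext t
        simp only [hF, Matrix.cons_val_two, Matrix.cons_val_one, Matrix.cons_val_zero, Matrix.tail_cons, Matrix.head_cons,
          hup 0 (by decide) t, hup 1 (by decide) t, hup 2 (by decide) t, h03 t]
        ring
      exact hk.unique hz
    · have hz : HasDerivAt (fun t => F (Function.update θ 3 t) 3) 0 (θ 3) := by
        have h := key_hasDerivAt (-(θ 0 * Real.sin (2 * θ 2) * Real.sin (θ 1)))
          (θ 0 * Real.cos (2 * θ 2) * Real.cos (θ 1)) (θ 3) hs
        convert h using 1
        funext t
        simp only [hF, Matrix.cons_val_three, Matrix.cons_val_two, Matrix.cons_val_one, Matrix.cons_val_zero, Matrix.tail_cons, Matrix.head_cons,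
          hup 0 (by decide) t, hup 1 (by decide) t, hup 2 (by decide) t, h03 t]
        ring
      exact hk.unique hz
  have hJ : J.det = 0 :=
    Matrix.det_eq_zero_of_column_eq_zero 3 (fun k => hcol k)
  refine ⟨hJ, fun ΓA => ?_⟩
  have hdet : (Jᵀ * ΓA * J).det = 0 := by
    rw [Matrix.det_mul, Matrix.det_mul, hJ, mul_zero]
  refine ⟨hdet, fun h => ?_⟩
  have := (Matrix.isUnit_iff_isUnit_det _).mp h
  rw [hdet] at this
  simp at this
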